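/- For every integer n ≥ 3, the total number of peaks, summed over all flattened Catalan words of length n, equals (3^(n−2) − 1)(n − 1)/4. -/

import Mathlib

/-- `w : ℕ → ℕ` encodes a Catalan word of length `n` (0-indexed letters
`w 0, w 1, …, w (n-1)`): the first letter is `0`, each letter is at most the
previous one plus one, and `w` is normalized to vanish at positions `≥ n`. -/
def IsCatalanWord (n : ℕ) (w : ℕ → ℕ) : Prop :=
  w 0 = 0 ∧ (∀ i, i + 1 < n → w (i + 1) ≤ w i + 1) ∧ ∀ i, n ≤ i → w i = 0

/-- `j` is the starting position of one of the maximal weakly increasing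
contiguous subwords (runs of weak ascents) of the length-`n` word `w`. -/
def IsRunStart (n : ℕ) (w : ℕ → ℕ) (j : ℕ) : Prop :=
  j < n ∧ (j = 0 ∨ w j < w (j - 1))

/-- A word is flattened when the leading terms of its maximal weakly increasing
contiguous subwords, read from left to right, form a weakly increasing sequence. -/
def IsFlattened (n : ℕ) (w : ℕ → ℕ) : Prop :=
  ∀ i j, IsRunStart n w i → IsRunStart n w j → i ≤ j → w i ≤ w j

/-- The set of flattened Catalan words of length `n`. -/
def FlatCat (n : ℕ) : Set (ℕ → ℕ) := {w | IsCatalanWord n w ∧ IsFlattened n w}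

/-- Number of maximal strictly increasing contiguous subwords (runs of ascents):
`1 + #{ i : w_i ≥ w_{i+1} }`. -/
noncomputable def runsAsc (n : ℕ) (w : ℕ → ℕ) : ℕ :=
  1 + {i : ℕ | i + 1 < n ∧ w (i + 1) ≤ w i}.ncard

/-- Number of maximal weakly increasing contiguous subwords (runs of weak
ascents): `1 + #{ i : w_i > w_{i+1} }`. -/
noncomputable def wruns (n : ℕ) (w : ℕ → ℕ) : ℕ :=
  1 + {i : ℕ | i + 1 < n ∧ w (i + 1) < w i}.ncard

/-- Number of maximal strictly decreasing contiguous subwords (runs of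
descents): `1 + #{ i : w_i ≤ w_{i+1} }`. -/
noncomputable def runsDesc (n : ℕ) (w : ℕ → ℕ) : ℕ :=
  1 + {i : ℕ | i + 1 < n ∧ w i ≤ w (i + 1)}.ncard

/-- Number of maximal weakly decreasing contiguous subwords (runs of weak
descents): `1 + #{ i : w_i < w_{i+1} }`. -/
noncomputable def wrunsDesc (n : ℕ) (w : ℕ → ℕ) : ℕ :=
  1 + {i : ℕ | i + 1 < n ∧ w i < w (i + 1)}.ncard

/-- An `ℓ`-valley `a b^ℓ (b+1)` (with `a > b`) occurring at position `i` of the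
length-`n` word `w`. -/
def IsLValley (n : ℕ) (w : ℕ → ℕ) (ℓ i : ℕ) : Prop :=
  i + ℓ + 1 < n ∧ w (i + 1) < w i ∧ (∀ t, 1 ≤ t → t ≤ ℓ → w (i + t) = w (i + 1)) ∧
    w (i + ℓ + 1) = w (i + 1) + 1

/-- Number of `ℓ`-valleys of `w`. -/
noncomputable def lValleyCount (n : ℕ) (w : ℕ → ℕ) (ℓ : ℕ) : ℕ :=
  {i : ℕ | IsLValley n w ℓ i}.ncard

/-- Number of valleys of `w` (all `ℓ`-valleys, `ℓ ≥ 1`). -/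
noncomputable def valleyCount (n : ℕ) (w : ℕ → ℕ) : ℕ :=
  {p : ℕ × ℕ | 1 ≤ p.2 ∧ IsLValley n w p.2 p.1}.ncard

/-- A symmetric valley `a (a-1)^ℓ a` (with `ℓ ≥ 1`) occurring at position `i`. -/
def IsSymValley (n : ℕ) (w : ℕ → ℕ) (ℓ i : ℕ) : Prop :=
  i + ℓ + 1 < n ∧ w i = w (i + 1) + 1 ∧ (∀ t, 1 ≤ t → t ≤ ℓ → w (i + t) = w (i + 1)) ∧
    w (i + ℓ + 1) = w i

/-- Number of symmetric valleys of `w` (over all `ℓ ≥ 1`). -/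
noncomputable def symValleyCount (n : ℕ) (w : ℕ → ℕ) : ℕ :=
  {p : ℕ × ℕ | 1 ≤ p.2 ∧ IsSymValley n w p.2 p.1}.ncard

/-- An `ℓ`-peak `a (a+1)^ℓ b` (with `a ≥ b`) occurring at position `i` of the
length-`n` word `w`. -/
def IsLPeak (n : ℕ) (w : ℕ → ℕ) (ℓ i : ℕ) : Prop :=
  i + ℓ + 1 < n ∧ (∀ t, 1 ≤ t → t ≤ ℓ → w (i + t) = w i + 1) ∧ w (i + ℓ + 1) ≤ w i

/-- Number of `ℓ`-peaks of `w`. -/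
noncomputable def lPeakCount (n : ℕ) (w : ℕ → ℕ) (ℓ : ℕ) : ℕ :=
  {i : ℕ | IsLPeak n w ℓ i}.ncard

/-- Number of peaks of `w` (all `ℓ`-peaks, `ℓ ≥ 1`). -/
noncomputable def peakCount (n : ℕ) (w : ℕ → ℕ) : ℕ :=
  {p : ℕ × ℕ | 1 ≤ p.2 ∧ IsLPeak n w p.2 p.1}.ncard

/-- A symmetric peak `a (a+1)^ℓ a` (with `ℓ ≥ 1`) occurring at position `i`. -/
def IsSymPeak (n : ℕ) (w : ℕ → ℕ) (ℓ i : ℕ) : Prop :=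
  i + ℓ + 1 < n ∧ (∀ t, 1 ≤ t → t ≤ ℓ → w (i + t) = w i + 1) ∧ w (i + ℓ + 1) = w i

/-- Number of symmetric peaks of `w` (over all `ℓ ≥ 1`). -/
noncomputable def symPeakCount (n : ℕ) (w : ℕ → ℕ) : ℕ :=
  {p : ℕ × ℕ | 1 ≤ p.2 ∧ IsSymPeak n w p.2 p.1}.ncard

section FCAuxSection
namespace FCAux

lemma cat_le {n : ℕ} {w : ℕ → ℕ} (h : IsCatalanWord n w) : ∀ i, w i ≤ i := by
  intro i
  induction i with
  | zero => simp [h.1]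
  | succ k ih =>
    by_cases hk : k + 1 < n
    · exact le_trans (h.2.1 k hk) (by omega)
    · rw [h.2.2 (k+1) (by omega)]; omega

lemma flatcat_finite (n : ℕ) : (FlatCat n).Finite := by
  have hsub : FlatCat n ⊆
      Set.range (fun (g : Fin n → Fin (n+1)) => fun i => if h : i < n then (g ⟨i, h⟩ : ℕ) else 0) := by
    intro w hw
    refine ⟨fun i => ⟨w i, by have := cat_le hw.1 i; omega⟩, ?_⟩
    funext i
    by_cases h : i < n
    · simp [h]
    · simp [h, hw.1.2.2 i (by omega)]
  exact Set.Finite.subset (Set.finite_range _) hsub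

noncomputable def FC (n : ℕ) : Finset (ℕ → ℕ) := (flatcat_finite n).toFinset

lemma mem_FC {n : ℕ} {w : ℕ → ℕ} : w ∈ FC n ↔ w ∈ FlatCat n := Set.Finite.mem_toFinset _

/-- set of descent positions -/
def dSet (n : ℕ) (w : ℕ → ℕ) : Set ℕ := {j | j + 1 < n ∧ w (j + 1) < w j}

lemma dSet_finite (n : ℕ) (w : ℕ → ℕ) : (dSet n w).Finite :=
  Set.Finite.subset (Set.finite_Iio n) (fun j hj => by have := hj.1; simp only [Set.mem_Iio]; omega)

noncomputable def dCount (n : ℕ) (w : ℕ → ℕ) : ℕ := (dSet n w).ncard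

noncomputable def jstar (n : ℕ) (w : ℕ → ℕ) : ℕ := sSup {j | IsRunStart n w j}

noncomputable def lastStart (n : ℕ) (w : ℕ → ℕ) : ℕ := w (jstar n w)

lemma runstart_zero {n : ℕ} {w : ℕ → ℕ} (hn : 1 ≤ n) : IsRunStart n w 0 := ⟨hn, Or.inl rfl⟩

lemma runstart_bdd {n : ℕ} {w : ℕ → ℕ} : BddAbove {j | IsRunStart n w j} :=
  ⟨n, fun j hj => le_of_lt hj.1⟩

lemma jstar_runstart {n : ℕ} {w : ℕ → ℕ} (hn : 1 ≤ n) : IsRunStart n w (jstar n w) := by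
  refine Nat.sSup_mem ⟨0, ?_⟩ runstart_bdd
  exact runstart_zero hn

lemma le_jstar {n : ℕ} {w : ℕ → ℕ} {j : ℕ} (hj : IsRunStart n w j) : j ≤ jstar n w :=
  le_csSup runstart_bdd hj

lemma jstar_lt {n : ℕ} {w : ℕ → ℕ} (hn : 1 ≤ n) : jstar n w < n := (jstar_runstart hn).1

lemma mono_after_jstar {n : ℕ} {w : ℕ → ℕ} (hw : w ∈ FlatCat n) :
    ∀ k, jstar n w ≤ k → k < n → lastStart n w ≤ w k := by
  intro k hk
  induction k, hk using Nat.le_induction with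
  | base => intro _; exact le_refl _
  | succ k hk ih =>
    intro hkn
    have hwk := ih (by omega)
    by_cases hlt : w (k + 1) < w k
    · exfalso
      have : IsRunStart n w (k + 1) := ⟨hkn, Or.inr (by simpa using hlt)⟩
      have := le_jstar this
      omega
    · omega

lemma lastStart_le_last {n : ℕ} {w : ℕ → ℕ} (hw : w ∈ FlatCat n) (hn : 1 ≤ n) :
    lastStart n w ≤ w (n - 1) :=
  mono_after_jstar hw (n - 1) (by have := jstar_lt (w := w) hn; omega) (by omega)

lemma runstart_val_le {n : ℕ} {w : ℕ → ℕ} (hw : w ∈ FlatCat n) {j : ℕ}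
    (hj : IsRunStart n w j) : w j ≤ lastStart n w :=
  hw.2 j (jstar n w) hj (jstar_runstart (by have := hj.1; omega)) (le_jstar hj)

end FCAux

namespace FCAux

lemma peak_inj_aux {n : ℕ} {w : ℕ → ℕ} {i ℓ i' ℓ' : ℕ} (h1 : 1 ≤ ℓ)
    (hp : IsLPeak n w ℓ i) (hp' : IsLPeak n w ℓ' i')
    (heq : i + ℓ = i' + ℓ') (hlt : ℓ < ℓ') : False := by
  have ha := hp'.2.1 (ℓ' - ℓ) (by omega) (by omega)
  have hb := hp'.2.1 (ℓ' - ℓ + 1) (by omega) (by omega)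
  have hc := hp.2.1 1 le_rfl h1
  have e1 : i' + (ℓ' - ℓ) = i := by omega
  have e2 : i' + (ℓ' - ℓ + 1) = i + 1 := by omega
  rw [e1] at ha
  rw [e2] at hb
  omega

lemma peak_bijOn {n : ℕ} {w : ℕ → ℕ} (hw : w ∈ FlatCat n) :
    Set.BijOn (fun p : ℕ × ℕ => p.1 + p.2)
      {p : ℕ × ℕ | 1 ≤ p.2 ∧ IsLPeak n w p.2 p.1} (dSet n w) := by
  constructor
  · -- MapsTo
    rintro ⟨i, ℓ⟩ ⟨hℓ, hlt, hplat, hdrop⟩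
    dsimp only at hℓ hlt hplat hdrop
    have h1 : w (i + ℓ) = w i + 1 := hplat ℓ hℓ le_rfl
    show i + ℓ + 1 < n ∧ w (i + ℓ + 1) < w (i + ℓ)
    omega
  constructor
  · -- InjOn
    rintro ⟨i, ℓ⟩ ⟨h1, hp⟩ ⟨i', ℓ'⟩ ⟨h1', hp'⟩ heq
    simp only at heq
    rcases lt_trichotomy ℓ ℓ' with h | h | h
    · exact absurd (peak_inj_aux h1 hp hp' heq h) not_false
    · have : i = i' := by omega
      simp [this, h]
    · exact absurd (peak_inj_aux h1' hp' hp heq.symm h) not_false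
  · -- SurjOn
    rintro j ⟨hj1, hj2⟩
    have w0 : w 0 = 0 := hw.1.1
    have hwj : 1 ≤ w j := by omega
    have hTj : j ≤ j ∧ w (j - j) ≠ w j := by
      constructor
      · exact le_rfl
      · simp only [Nat.sub_self, w0]; omega
    classical
    have hex : ∃ t, t ≤ j ∧ w (j - t) ≠ w j := ⟨j, hTj⟩
    set t0 := Nat.find hex with ht0def
    have hspec : t0 ≤ j ∧ w (j - t0) ≠ w j := Nat.find_spec hex
    have hmin : ∀ t, t < t0 → t ≤ j → w (j - t) = w j := by
      intro t ht htj
      have := Nat.find_min hex ht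
      push_neg at this
      exact this htj
    have ht01 : 1 ≤ t0 := by
      rcases Nat.eq_zero_or_pos t0 with h | h
      · exfalso; rw [h] at hspec; simp at hspec
      · exact h
    have ht0j : t0 ≤ j := hspec.1
    set i := j - t0 with hidef
    have hplat : ∀ t, 1 ≤ t → t ≤ t0 → w (i + t) = w j := by
      intro t h1t ht
      have e : i + t = j - (t0 - t) := by omega
      rw [e]
      exact hmin (t0 - t) (by omega) (by omega)
    have hstep : w (i + 1) = w j := hplat 1 le_rfl ht01
    have hcat : w (i + 1) ≤ w i + 1 := hw.1.2.1 i (by omega)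
    have hne : w i ≠ w j := hspec.2
    rcases lt_or_gt_of_ne hne with hlt | hgt
    · -- w i < w j, the peak case
      have hwi : w i + 1 = w j := by omega
      refine ⟨(i, t0), ⟨ht01, ?_, ?_, ?_⟩, by simp; omega⟩
      · simp only; omega
      · intro t h1t ht; simp only; rw [hplat t h1t ht]; omega
      · simp only
        have e : i + t0 + 1 = j + 1 := by omega
        rw [e]; omega
    · -- w i > w j: contradiction with flattenedness
      exfalso
      have rs1 : IsRunStart n w (i + 1) := by
        refine ⟨by omega, Or.inr ?_⟩
        have e : i + 1 - 1 = i := by omega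
        rw [e]; omega
      have rs2 : IsRunStart n w (j + 1) := by
        refine ⟨by omega, Or.inr ?_⟩
        have e : j + 1 - 1 = j := by omega
        rw [e]; omega
      have := hw.2 (i + 1) (j + 1) rs1 rs2 (by omega)
      omega

lemma peakCount_eq_dCount {n : ℕ} {w : ℕ → ℕ} (hw : w ∈ FlatCat n) :
    peakCount n w = dCount n w := by
  unfold peakCount dCount
  rw [← (peak_bijOn hw).image_eq]
  exact (Set.ncard_image_of_injOn (peak_bijOn hw).injOn).symm

end FCAux

namespace FCAux

lemma update_runstart_iff {n : ℕ} {w : ℕ → ℕ} {x j : ℕ} (hj : j < n) :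
    IsRunStart (n + 1) (Function.update w n x) j ↔ IsRunStart n w j := by
  unfold IsRunStart
  rw [Function.update_of_ne (by omega : j ≠ n),
    Function.update_of_ne (by omega : j - 1 ≠ n)]
  constructor
  · rintro ⟨_, h⟩; exact ⟨hj, h⟩
  · rintro ⟨_, h⟩; exact ⟨by omega, h⟩

lemma trunc_runstart_iff {n : ℕ} {w' : ℕ → ℕ} {j : ℕ} (hj : j < n) :
    IsRunStart (n + 1) w' j ↔ IsRunStart n (Function.update w' n 0) j := by
  unfold IsRunStart
  rw [Function.update_of_ne (by omega : j ≠ n),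
    Function.update_of_ne (by omega : j - 1 ≠ n)]
  constructor
  · rintro ⟨_, h⟩; exact ⟨hj, h⟩
  · rintro ⟨_, h⟩; exact ⟨by omega, h⟩

lemma mem_extend {n : ℕ} {w : ℕ → ℕ} (hn : 1 ≤ n) (hw : w ∈ FlatCat n) {x : ℕ}
    (hx1 : lastStart n w ≤ x) (hx2 : x ≤ w (n - 1) + 1) :
    Function.update w n x ∈ FlatCat (n + 1) := by
  have hs := lastStart_le_last hw hn
  constructor
  · refine ⟨?_, ?_, ?_⟩
    · rw [Function.update_of_ne (by omega : (0:ℕ) ≠ n)]; exact hw.1.1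
    · intro i hi
      rcases Nat.lt_or_ge (i + 1) n with h | h
      · rw [Function.update_of_ne (by omega : i + 1 ≠ n),
          Function.update_of_ne (by omega : i ≠ n)]
        exact hw.1.2.1 i h
      · have hin : i + 1 = n := by omega
        have hieq : i = n - 1 := by omega
        rw [hin, Function.update_self, Function.update_of_ne (by omega : i ≠ n), hieq]
        exact hx2
    · intro i hi
      rw [Function.update_of_ne (by omega : i ≠ n)]
      exact hw.1.2.2 i (by omega)
  · intro i j hi hj hij
    rcases Nat.lt_or_ge j (n + 1) with _ | h
    · rcases Nat.lt_or_ge j n with hjn | hjn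
      · have hin : i < n := by omega
        rw [Function.update_of_ne (by omega : i ≠ n),
          Function.update_of_ne (by omega : j ≠ n)]
        exact hw.2 i j ((update_runstart_iff hin).mp hi) ((update_runstart_iff hjn).mp hj) hij
      · have hjn' : j = n := by omega
        rw [hjn', Function.update_self]
        rcases Nat.lt_or_ge i n with hin | hin
        · rw [Function.update_of_ne (by omega : i ≠ n)]
          calc w i ≤ lastStart n w := runstart_val_le hw ((update_runstart_iff hin).mp hi)
            _ ≤ x := hx1
        · have hin' : i = n := by omega
          rw [hin', Function.update_self]
    · exact absurd hj.1 (by omega)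

lemma extend_mem_trunc {n : ℕ} {w' : ℕ → ℕ} (hn : 1 ≤ n) (hw' : w' ∈ FlatCat (n + 1)) :
    Function.update w' n 0 ∈ FlatCat n := by
  constructor
  · refine ⟨?_, ?_, ?_⟩
    · rw [Function.update_of_ne (by omega : (0:ℕ) ≠ n)]; exact hw'.1.1
    · intro i hi
      rw [Function.update_of_ne (by omega : i + 1 ≠ n),
        Function.update_of_ne (by omega : i ≠ n)]
      exact hw'.1.2.1 i (by omega)
    · intro i hi
      rcases Nat.eq_or_lt_of_le hi with h | h
      · rw [← h, Function.update_self]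
      · rw [Function.update_of_ne (by omega : i ≠ n)]
        exact hw'.1.2.2 i (by omega)
  · intro i j hi hj hij
    have hin : i < n := hi.1
    have hjn : j < n := hj.1
    rw [Function.update_of_ne (by omega : i ≠ n), Function.update_of_ne (by omega : j ≠ n)]
    exact hw'.2 i j ((trunc_runstart_iff hin).mpr hi) ((trunc_runstart_iff hjn).mpr hj) hij

lemma trunc_extend {n : ℕ} {w' : ℕ → ℕ} :
    Function.update (Function.update w' n 0) n (w' n) = w' := by
  funext i
  rcases eq_or_ne i n with h | h
  · rw [h, Function.update_self]
  · rw [Function.update_of_ne h, Function.update_of_ne h]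

lemma trunc_lower {n : ℕ} {w' : ℕ → ℕ} (hn : 1 ≤ n) (hw' : w' ∈ FlatCat (n + 1)) :
    lastStart n (Function.update w' n 0) ≤ w' n := by
  set v := Function.update w' n 0 with hv
  have hvmem : v ∈ FlatCat n := extend_mem_trunc hn hw'
  have hjlt : jstar n v < n := jstar_lt hn
  have hval : v (jstar n v) = w' (jstar n v) := Function.update_of_ne (by omega) _ _
  rcases Nat.lt_or_ge (w' n) (w' (n - 1)) with h | h
  · -- n is a run start of w'
    have rsn : IsRunStart (n + 1) w' n := by
      refine ⟨by omega, Or.inr ?_⟩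
      exact h
    have rsj : IsRunStart (n + 1) w' (jstar n v) :=
      (trunc_runstart_iff hjlt).mpr (jstar_runstart hn)
    have := hw'.2 (jstar n v) n rsj rsn (by omega)
    unfold lastStart
    omega
  · have h1 : lastStart n v ≤ v (n - 1) := lastStart_le_last hvmem hn
    have h2 : v (n - 1) = w' (n - 1) := Function.update_of_ne (by omega) _ _
    omega

lemma trunc_upper {n : ℕ} {w' : ℕ → ℕ} (hn : 1 ≤ n) (hw' : w' ∈ FlatCat (n + 1)) :
    w' n ≤ Function.update w' n 0 (n - 1) + 1 := by
  rw [Function.update_of_ne (by omega : n - 1 ≠ n)]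
  have := hw'.1.2.1 (n - 1) (by omega)
  have e : n - 1 + 1 = n := by omega
  rw [e] at this
  exact this

lemma lastStart_extend {n : ℕ} {w : ℕ → ℕ} (hn : 1 ≤ n) (hw : w ∈ FlatCat n) {x : ℕ}
    (hx1 : lastStart n w ≤ x) (hx2 : x ≤ w (n - 1) + 1) :
    lastStart (n + 1) (Function.update w n x) =
      if x < w (n - 1) then x else lastStart n w := by
  split_ifs with h
  · -- jstar (n+1) v = n
    have rsn : IsRunStart (n + 1) (Function.update w n x) n := by
      refine ⟨by omega, Or.inr ?_⟩
      rw [Function.update_self, Function.update_of_ne (by omega : n - 1 ≠ n)]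
      exact h
    have h1 : n ≤ jstar (n + 1) (Function.update w n x) := le_jstar rsn
    have h2 : jstar (n + 1) (Function.update w n x) < n + 1 := jstar_lt (by omega)
    have : jstar (n + 1) (Function.update w n x) = n := by omega
    unfold lastStart
    rw [this, Function.update_self]
  · -- run start sets coincide
    have hsets : {j | IsRunStart (n + 1) (Function.update w n x) j} = {j | IsRunStart n w j} := by
      ext j
      simp only [Set.mem_setOf_eq]
      constructor
      · intro hj
        have hjlt : j < n + 1 := hj.1
        rcases Nat.lt_or_ge j n with hjn | hjn
        · exact (update_runstart_iff hjn).mp hj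
        · have hj1 : j = n := by omega
          exfalso
          rcases hj.2 with h0 | hlt
          · omega
          · rw [hj1, Function.update_self, Function.update_of_ne (by omega : n - 1 ≠ n)] at hlt
            omega
      · intro hj
        exact (update_runstart_iff hj.1).mpr hj
    have hlt : jstar n w < n := jstar_lt hn
    unfold lastStart jstar
    unfold jstar at hlt
    rw [hsets, Function.update_of_ne (by omega)]

lemma dSet_extend {n : ℕ} {w : ℕ → ℕ} (hn : 1 ≤ n) {x : ℕ} :
    dSet (n + 1) (Function.update w n x) =
      if x < w (n - 1) then insert (n - 1) (dSet n w) else dSet n w := by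
  ext j
  simp only [dSet, Set.mem_setOf_eq]
  rcases Nat.lt_or_ge (j + 1) n with h | h
  · rw [Function.update_of_ne (by omega : j + 1 ≠ n),
      Function.update_of_ne (by omega : j ≠ n)]
    split_ifs with hx
    · simp only [Set.mem_insert_iff, Set.mem_setOf_eq]
      constructor
      · intro hh; exact Or.inr ⟨h, hh.2⟩
      · rintro (hh | hh)
        · omega
        · exact ⟨by omega, hh.2⟩
    · constructor
      · intro hh; exact ⟨h, hh.2⟩
      · intro hh; exact ⟨by omega, hh.2⟩
  · rcases Nat.lt_or_ge j n with hj | hj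
    · have hjn : j = n - 1 := by omega
      have hj1 : j + 1 = n := by omega
      rw [hj1, Function.update_self, Function.update_of_ne (by omega : j ≠ n), hjn]
      split_ifs with hx
      · constructor
        · intro _; exact Set.mem_insert _ _
        · intro _; exact ⟨by omega, hx⟩
      · simp only [Set.mem_setOf_eq]
        constructor
        · intro hh; exact absurd hh.2 hx
        · intro hh; exact absurd hh.1 (by omega)
    · split_ifs with hx
      · simp only [Set.mem_insert_iff, Set.mem_setOf_eq]
        constructor
        · intro hh; omega
        · intro hh
          rcases hh with hh | hh
          · omega
          · omega
      · simp only [Set.mem_setOf_eq]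
        constructor
        · intro hh; omega
        · intro hh; omega

lemma dCount_extend {n : ℕ} {w : ℕ → ℕ} (hn : 1 ≤ n) {x : ℕ} :
    dCount (n + 1) (Function.update w n x) =
      dCount n w + if x < w (n - 1) then 1 else 0 := by
  unfold dCount
  rw [dSet_extend hn]
  split_ifs with h
  · rw [Set.ncard_insert_of_notMem (by intro hh; exact absurd hh.1 (by omega)) (dSet_finite n w)]
  · omega

end FCAux

namespace FCAux

noncomputable local instance : DecidableEq (ℕ → ℕ) := Classical.decEq _

lemma extend_inj {n : ℕ} {w w' : ℕ → ℕ} (hw : w ∈ FlatCat n) (hw' : w' ∈ FlatCat n)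
    {x x' : ℕ} (h : Function.update w n x = Function.update w' n x') : w = w' ∧ x = x' := by
  constructor
  · funext i
    rcases eq_or_ne i n with hi | hi
    · rw [hi, hw.1.2.2 n le_rfl, hw'.1.2.2 n le_rfl]
    · have := congrFun h i
      rwa [Function.update_of_ne hi, Function.update_of_ne hi] at this
  · have := congrFun h n
    rwa [Function.update_self, Function.update_self] at this

lemma fiber_sum {n : ℕ} (hn : 1 ≤ n) (F : (ℕ → ℕ) → ℕ) :
    ∑ w ∈ FC (n + 1), F w =
      ∑ w ∈ FC n, ∑ x ∈ Finset.Icc (lastStart n w) (w (n - 1) + 1),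
        F (Function.update w n x) := by
  have himg : ∀ w ∈ FC n,
      ∑ x ∈ Finset.Icc (lastStart n w) (w (n - 1) + 1), F (Function.update w n x)
      = ∑ y ∈ (Finset.Icc (lastStart n w) (w (n - 1) + 1)).image (Function.update w n), F y := by
    intro w hw
    rw [Finset.sum_image]
    intro x _ y _ hxy
    have := congrFun hxy n
    rwa [Function.update_self, Function.update_self] at this
  rw [Finset.sum_congr rfl himg]
  rw [← Finset.sum_biUnion ?hdisj]
  case hdisj =>
    intro w hw w' hw' hne
    intro u hu1 hu2 y hy
    exfalso
    have hy1 := hu1 hy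
    have hy2 := hu2 hy
    simp only [Finset.mem_coe, Finset.mem_image] at hy1 hy2
    obtain ⟨x, _, hx⟩ := hy1
    obtain ⟨x', _, hx'⟩ := hy2
    rw [Finset.mem_coe, mem_FC] at hw hw'
    exact hne ((extend_inj hw hw' (hx.trans hx'.symm)).1)
  · apply Finset.sum_congr _ (fun _ _ => rfl)
    ext y
    simp only [Finset.mem_biUnion, Finset.mem_image]
    rw [mem_FC]
    constructor
    · intro hy
      refine ⟨Function.update y n 0, (mem_FC).mpr (extend_mem_trunc hn hy), y n, ?_, trunc_extend⟩
      simp only [Finset.mem_Icc]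
      exact ⟨trunc_lower hn hy, trunc_upper hn hy⟩
    · rintro ⟨w, hw, x, hx, rfl⟩
      rw [mem_FC] at hw
      simp only [Finset.mem_Icc] at hx
      exact mem_extend hn hw hx.1 hx.2

noncomputable def statA (n : ℕ) : ℕ := (FC n).card
noncomputable def statV (n : ℕ) : ℕ := ∑ w ∈ FC n, (w (n - 1) - lastStart n w)
noncomputable def statP (n : ℕ) : ℕ := ∑ w ∈ FC n, dCount n w
noncomputable def statQ (n : ℕ) : ℕ := ∑ w ∈ FC n, dCount n w * (w (n - 1) - lastStart n w)

lemma icc_decomp {s a : ℕ} (h : s ≤ a) :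
    Finset.Icc s (a + 1) = insert (a + 1) (insert a (Finset.Ico s a)) := by
  ext t
  simp only [Finset.mem_Icc, Finset.mem_insert, Finset.mem_Ico]
  omega

lemma notmem1 {s a : ℕ} : a + 1 ∉ insert a (Finset.Ico s a) := by
  simp only [Finset.mem_insert, Finset.mem_Ico]
  omega

lemma notmem2 {s a : ℕ} : a ∉ Finset.Ico s a := by
  simp only [Finset.mem_Ico]
  omega

lemma sumI1 {s a : ℕ} (h : s ≤ a) :
    ∑ _x ∈ Finset.Icc s (a + 1), 1 = (a - s) + 2 := by
  rw [Finset.sum_const, Nat.card_Icc, smul_eq_mul, mul_one]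
  omega

lemma sumI2 {s a : ℕ} (h : s ≤ a) :
    ∑ x ∈ Finset.Icc s (a + 1), (x - if x < a then x else s) = 1 + 2 * (a - s) := by
  rw [icc_decomp h, Finset.sum_insert notmem1, Finset.sum_insert notmem2]
  have h0 : ∑ x ∈ Finset.Ico s a, (x - if x < a then x else s) = 0 := by
    apply Finset.sum_eq_zero
    intro x hx
    simp only [Finset.mem_Ico] at hx
    rw [if_pos hx.2]
    omega
  rw [h0, if_neg (by omega), if_neg (by omega)]
  omega

lemma sumI3 {s a dc : ℕ} (h : s ≤ a) :
    ∑ x ∈ Finset.Icc s (a + 1), (dc + if x < a then 1 else 0)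
      = 2 * dc + (dc * (a - s) + (a - s)) := by
  rw [icc_decomp h, Finset.sum_insert notmem1, Finset.sum_insert notmem2]
  have h0 : ∑ x ∈ Finset.Ico s a, (dc + if x < a then 1 else 0)
      = (a - s) * (dc + 1) := by
    rw [Finset.sum_congr rfl (fun x hx => ?_), Finset.sum_const, Nat.card_Ico, smul_eq_mul]
    simp only [Finset.mem_Ico] at hx
    rw [if_pos hx.2]
  rw [h0, if_neg (by omega), if_neg (by omega)]
  ring_nf

lemma sumI4 {s a dc : ℕ} (h : s ≤ a) :
    ∑ x ∈ Finset.Icc s (a + 1),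
        ((dc + if x < a then 1 else 0) * (x - if x < a then x else s))
      = dc + 2 * (dc * (a - s)) := by
  rw [icc_decomp h, Finset.sum_insert notmem1, Finset.sum_insert notmem2]
  have h0 : ∑ x ∈ Finset.Ico s a,
      ((dc + if x < a then 1 else 0) * (x - if x < a then x else s)) = 0 := by
    apply Finset.sum_eq_zero
    intro x hx
    simp only [Finset.mem_Ico] at hx
    rw [if_pos hx.2, if_pos hx.2, Nat.sub_self, mul_zero]
  rw [h0, if_neg (by omega), if_neg (by omega), if_neg (by omega), if_neg (by omega)]
  have e1 : a + 1 - s = (a - s) + 1 := by omega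
  rw [e1]
  ring_nf

lemma R1 {n : ℕ} (hn : 1 ≤ n) : statA (n + 1) = statV n + 2 * statA n := by
  have h1 : statA (n + 1) = ∑ w ∈ FC (n + 1), 1 := by
    unfold statA
    rw [Finset.card_eq_sum_ones]
  rw [h1, fiber_sum hn]
  have h2 : ∀ w ∈ FC n,
      ∑ _x ∈ Finset.Icc (lastStart n w) (w (n - 1) + 1), 1
        = (w (n - 1) - lastStart n w) + 2 := by
    intro w hw
    exact sumI1 (lastStart_le_last (mem_FC.mp hw) hn)
  rw [Finset.sum_congr rfl h2, Finset.sum_add_distrib, Finset.sum_const, smul_eq_mul]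
  simp only [statV, statA]
  ring

lemma R2 {n : ℕ} (hn : 1 ≤ n) : statV (n + 1) = statA n + 2 * statV n := by
  unfold statV
  rw [fiber_sum hn]
  have h2 : ∀ w ∈ FC n,
      ∑ x ∈ Finset.Icc (lastStart n w) (w (n - 1) + 1),
          (Function.update w n x (n + 1 - 1) - lastStart (n + 1) (Function.update w n x))
        = 1 + 2 * (w (n - 1) - lastStart n w) := by
    intro w hw
    rw [mem_FC] at hw
    have hsa : lastStart n w ≤ w (n - 1) := lastStart_le_last hw hn
    have key : ∀ x ∈ Finset.Icc (lastStart n w) (w (n - 1) + 1),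
        Function.update w n x (n + 1 - 1) - lastStart (n + 1) (Function.update w n x)
          = x - if x < w (n - 1) then x else lastStart n w := by
      intro x hx
      simp only [Finset.mem_Icc] at hx
      rw [Nat.add_sub_cancel, Function.update_self, lastStart_extend hn hw hx.1 hx.2]
    rw [Finset.sum_congr rfl key]
    exact sumI2 hsa
  rw [Finset.sum_congr rfl h2, Finset.sum_add_distrib, Finset.sum_const, smul_eq_mul,
    ← Finset.mul_sum]
  simp only [statA]
  ring

lemma R3 {n : ℕ} (hn : 1 ≤ n) : statP (n + 1) = 2 * statP n + (statQ n + statV n) := by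
  unfold statP
  rw [fiber_sum hn]
  have h2 : ∀ w ∈ FC n,
      ∑ x ∈ Finset.Icc (lastStart n w) (w (n - 1) + 1),
          dCount (n + 1) (Function.update w n x)
        = 2 * dCount n w
            + (dCount n w * (w (n - 1) - lastStart n w) + (w (n - 1) - lastStart n w)) := by
    intro w hw
    rw [mem_FC] at hw
    have hsa : lastStart n w ≤ w (n - 1) := lastStart_le_last hw hn
    have key : ∀ x ∈ Finset.Icc (lastStart n w) (w (n - 1) + 1),
        dCount (n + 1) (Function.update w n x)
          = dCount n w + if x < w (n - 1) then 1 else 0 := by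
      intro x _
      exact dCount_extend hn
    rw [Finset.sum_congr rfl key]
    exact sumI3 hsa
  rw [Finset.sum_congr rfl h2, Finset.sum_add_distrib, Finset.sum_add_distrib,
    ← Finset.mul_sum]
  simp only [statQ, statV]

lemma R4 {n : ℕ} (hn : 1 ≤ n) : statQ (n + 1) = statP n + 2 * statQ n := by
  unfold statQ
  rw [fiber_sum hn]
  have h2 : ∀ w ∈ FC n,
      ∑ x ∈ Finset.Icc (lastStart n w) (w (n - 1) + 1),
          (dCount (n + 1) (Function.update w n x)
            * (Function.update w n x (n + 1 - 1) - lastStart (n + 1) (Function.update w n x)))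
        = dCount n w + 2 * (dCount n w * (w (n - 1) - lastStart n w)) := by
    intro w hw
    rw [mem_FC] at hw
    have hsa : lastStart n w ≤ w (n - 1) := lastStart_le_last hw hn
    have key : ∀ x ∈ Finset.Icc (lastStart n w) (w (n - 1) + 1),
        dCount (n + 1) (Function.update w n x)
            * (Function.update w n x (n + 1 - 1) - lastStart (n + 1) (Function.update w n x))
          = (dCount n w + if x < w (n - 1) then 1 else 0)
              * (x - if x < w (n - 1) then x else lastStart n w) := by
      intro x hx
      simp only [Finset.mem_Icc] at hx
      rw [Nat.add_sub_cancel, Function.update_self, lastStart_extend hn hw hx.1 hx.2,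
        dCount_extend hn]
    rw [Finset.sum_congr rfl key]
    exact sumI4 hsa
  rw [Finset.sum_congr rfl h2, Finset.sum_add_distrib, ← Finset.mul_sum]
  simp only [statP, statQ]

end FCAux

namespace FCAux

lemma flatcat_one : FlatCat 1 = {fun _ => (0 : ℕ)} := by
  ext w
  constructor
  · intro hw
    have : w = fun _ => 0 := funext fun i => by
      rcases Nat.eq_zero_or_pos i with h | h
      · rw [h]; exact hw.1.1
      · exact hw.1.2.2 i h
    rw [Set.mem_singleton_iff, this]
  · intro hw
    rw [Set.mem_singleton_iff] at hw
    subst hw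
    exact ⟨⟨rfl, fun i hi => by omega, fun i _ => rfl⟩, fun i j _ _ _ => le_refl 0⟩

noncomputable local instance : DecidableEq (ℕ → ℕ) := Classical.decEq _

lemma FC_one : FC 1 = {fun _ => (0 : ℕ)} := by
  apply Finset.ext
  intro w
  rw [mem_FC, flatcat_one]
  simp

lemma dSet_one (w : ℕ → ℕ) : dSet 1 w = ∅ := by
  ext j
  simp only [dSet, Set.mem_setOf_eq, Set.mem_empty_iff_false, iff_false]
  omega

lemma statA_one : statA 1 = 1 := by
  rw [statA, FC_one, Finset.card_singleton]

lemma statV_one : statV 1 = 0 := by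
  rw [statV, FC_one, Finset.sum_singleton]
  simp

lemma statP_one : statP 1 = 0 := by
  rw [statP, FC_one, Finset.sum_singleton, dCount, dSet_one, Set.ncard_empty]

lemma statQ_one : statQ 1 = 0 := by
  rw [statQ, FC_one, Finset.sum_singleton, dCount, dSet_one, Set.ncard_empty]
  rfl

lemma closed (n : ℕ) (hn : 1 ≤ n) :
    (statA n : ℚ) = (3 ^ (n - 1) + 1) / 2 ∧ (statV n : ℚ) = (3 ^ (n - 1) - 1) / 2 ∧
      (statP n : ℚ) = ((n : ℚ) - 1) * (3 ^ (n - 1) - 3) / 12 ∧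
      (statQ n : ℚ) = (((n : ℚ) - 4) * 3 ^ (n - 1) + 3 * (n : ℚ)) / 12 := by
  induction n, hn using Nat.le_induction with
  | base =>
    rw [statA_one, statV_one, statP_one, statQ_one]
    norm_num
  | succ n hn ih =>
    obtain ⟨hA, hV, hP, hQ⟩ := ih
    have hpow : (3 : ℚ) ^ n = 3 * 3 ^ (n - 1) := by
      have e : n = (n - 1) + 1 := by omega
      conv_lhs => rw [e]
      rw [pow_succ]
      ring
    simp only [Nat.add_sub_cancel]
    refine ⟨?_, ?_, ?_, ?_⟩
    · rw [R1 hn]; push_cast; rw [hA, hV, hpow]; ring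
    · rw [R2 hn]; push_cast; rw [hA, hV, hpow]; ring
    · rw [R3 hn]; push_cast; rw [hP, hQ, hV, hpow]; ring
    · rw [R4 hn]; push_cast; rw [hP, hQ, hpow]; ring

end FCAux


end FCAuxSection

/-- For every `n ≥ 3`, the total number of peaks over all flattened Catalan
words of length `n` equals `(3^(n-2) - 1)(n - 1)/4`. -/
theorem flatCat_total_peaks (n : ℕ) (hn : 3 ≤ n) :
    ((∑ᶠ w ∈ FlatCat n, peakCount n w : ℕ) : ℚ) =
      (3 ^ (n - 2) - 1) * ((n : ℚ) - 1) / 4 := by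
  have h1 : (∑ᶠ w ∈ FlatCat n, peakCount n w) = FCAux.statP n := by
    rw [finsum_mem_eq_finite_toFinset_sum _ (FCAux.flatcat_finite n)]
    apply Finset.sum_congr rfl
    intro w hw
    exact FCAux.peakCount_eq_dCount (FCAux.mem_FC.mp hw)
  rw [h1, (FCAux.closed n (by omega)).2.2.1]
  have hpow : (3 : ℚ) ^ (n - 1) = 3 * 3 ^ (n - 2) := by
    have e : n - 1 = (n - 2) + 1 := by omega
    rw [e, pow_succ]
    ring
  rw [hpow]
  ring
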